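/- arXiv:1805.09038 — 2 statements merged into one kernel-verified Lean document; each statement's English description precedes it below -/
import Mathlib

section
/- Let Σ be a positive-definite n×n matrix, H an n×p full-rank matrix with p < n, and W an n×(n−p) matrix with WᵀH = 0 and WᵀW = I_{n−p}. Then for every y ∈ ℝⁿ, yᵀ W (Wᵀ Σ W)⁻¹ Wᵀ y = yᵀ (Σ⁻¹ − Σ⁻¹H(HᵀΣ⁻¹H)⁻¹HᵀΣ⁻¹) y. -/
open Matrix

/-- Conjugation of a positive definite matrix by an injective (as mulVec) matrix
is positive definite. -/
lemma posDef_transpose_mul_mul {m k : ℕ} {T : Matrix (Fin m) (Fin m) ℝ}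
    (hT : T.PosDef) (B : Matrix (Fin m) (Fin k) ℝ)
    (hB : Function.Injective B.mulVec) : (Bᵀ * T * B).PosDef := by
  rw [posDef_iff_dotProduct_mulVec]
  constructor
  · have := Matrix.isHermitian_conjTranspose_mul_mul B hT.1
    rwa [conjTranspose_eq_transpose_of_trivial] at this
  · intro x hx
    have hBx : B *ᵥ x ≠ 0 := by
      intro h
      apply hx
      apply hB
      simpa using h
    have e : star x ⬝ᵥ (Bᵀ * T * B) *ᵥ x = star (B *ᵥ x) ⬝ᵥ T *ᵥ (B *ᵥ x) := by
      rw [star_trivial, star_trivial, Matrix.mul_assoc, ← mulVec_mulVec,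
        dotProduct_mulVec, vecMul_transpose, mulVec_mulVec]
    rw [e]
    exact hT.dotProduct_mulVec_pos hBx

/-- Identity relating the orthogonal-complement formulation of the integrated
Kriging likelihood to the projection formulation. -/
theorem stmt_9 {n p : ℕ} (hpn : p < n)
    (S : Matrix (Fin n) (Fin n) ℝ) (hS : S.PosDef)
    (H : Matrix (Fin n) (Fin p) ℝ) (hH : H.rank = p)
    (W : Matrix (Fin n) (Fin (n - p)) ℝ)
    (hWH : Wᵀ * H = 0) (hWW : Wᵀ * W = 1)
    (y : Fin n → ℝ) :
    y ⬝ᵥ (W * (Wᵀ * S * W)⁻¹ * Wᵀ).mulVec y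
      = y ⬝ᵥ (S⁻¹ - S⁻¹ * H * (Hᵀ * S⁻¹ * H)⁻¹ * Hᵀ * S⁻¹).mulVec y := by
  classical
  -- injectivity facts
  have hHinj : Function.Injective H.mulVec := by
    have h1 := LinearMap.finrank_range_add_finrank_ker H.mulVecLin
    have hr : Module.finrank ℝ ↥(LinearMap.range H.mulVecLin) = p := hH
    rw [hr] at h1
    simp only [Module.finrank_pi, Fintype.card_fin] at h1
    have hker : LinearMap.ker H.mulVecLin = ⊥ := by
      apply Submodule.finrank_eq_zero.mp
      omega
    have := LinearMap.ker_eq_bot.mp hker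
    intro a b hab
    exact this hab
  have hWinj : Function.Injective W.mulVec := by
    intro a b hab
    have h2 : (Wᵀ * W) *ᵥ a = (Wᵀ * W) *ᵥ b := by
      rw [← mulVec_mulVec, ← mulVec_mulVec, hab]
    simpa [hWW] using h2
  -- positive definiteness / invertibility facts
  have hSdet : IsUnit S.det := isUnit_iff_isUnit_det S |>.mp hS.isUnit
  have hSinv : S⁻¹.PosDef := hS.inv
  have hWSW : (Wᵀ * S * W).PosDef := posDef_transpose_mul_mul hS W hWinj
  have hHSH : (Hᵀ * S⁻¹ * H).PosDef := posDef_transpose_mul_mul hSinv H hHinj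
  have hWSWdet : IsUnit (Wᵀ * (S * W)).det := by
    rw [← Matrix.mul_assoc]
    exact isUnit_iff_isUnit_det _ |>.mp hWSW.isUnit
  have hHSHdet : IsUnit (Hᵀ * (S⁻¹ * H)).det := by
    rw [← Matrix.mul_assoc]
    exact isUnit_iff_isUnit_det _ |>.mp hHSH.isUnit
  have hHW : Hᵀ * W = 0 := by
    have := congrArg Matrix.transpose hWH
    simpa using this
  -- abbreviations
  set L : Matrix (Fin n) (Fin n) ℝ := W * (Wᵀ * S * W)⁻¹ * Wᵀ with hL
  set K : Matrix (Fin n) (Fin n) ℝ :=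
    S⁻¹ - S⁻¹ * H * (Hᵀ * S⁻¹ * H)⁻¹ * Hᵀ * S⁻¹ with hK
  -- key matrix identities
  have eLH : L * H = 0 := by
    rw [hL]
    simp only [Matrix.mul_assoc]
    rw [hWH, Matrix.mul_zero, Matrix.mul_zero]
  have eKH : K * H = 0 := by
    rw [hK, Matrix.sub_mul]
    simp only [Matrix.mul_assoc]
    rw [Matrix.nonsing_inv_mul _ hHSHdet, Matrix.mul_one, sub_self]
  have eLSW : L * (S * W) = W := by
    rw [hL]
    simp only [Matrix.mul_assoc]
    rw [Matrix.nonsing_inv_mul _ hWSWdet, Matrix.mul_one]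
  have hSSW : S⁻¹ * (S * W) = W := by
    rw [← Matrix.mul_assoc, Matrix.nonsing_inv_mul _ hSdet, Matrix.one_mul]
  have eKSW : K * (S * W) = W := by
    rw [hK, Matrix.sub_mul]
    simp only [Matrix.mul_assoc]
    rw [show S * W = S * W from rfl]
    rw [← Matrix.mul_assoc S⁻¹ S W, Matrix.nonsing_inv_mul _ hSdet, Matrix.one_mul,
      hHW, Matrix.mul_zero, Matrix.mul_zero, Matrix.mul_zero, sub_zero]
  -- surjectivity of (a, b) ↦ H a + (S W) b
  have hsurj : ∀ v : Fin n → ℝ, ∃ a b, v = H *ᵥ a + (S * W) *ᵥ b := by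
    set f := (H.mulVecLin).coprod ((S * W).mulVecLin) with hf
    have hfinj : Function.Injective f := by
      rw [← LinearMap.ker_eq_bot]
      rw [Submodule.eq_bot_iff]
      rintro ⟨a, b⟩ hab
      simp only [LinearMap.mem_ker, hf, LinearMap.coprod_apply, mulVecLin_apply] at hab
      have hb : b = 0 := by
        have h3 : Wᵀ *ᵥ (H *ᵥ a + (S * W) *ᵥ b) = 0 := by rw [hab, mulVec_zero]
        rw [mulVec_add, mulVec_mulVec, mulVec_mulVec, hWH, zero_mulVec, zero_add] at h3
        have hinj := Matrix.mulVec_injective_iff_isUnit.mpr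
          (isUnit_iff_isUnit_det _ |>.mpr hWSWdet)
        apply hinj
        simpa using h3
      have ha : a = 0 := by
        rw [hb, mulVec_zero, add_zero] at hab
        apply hHinj
        simpa using hab
      simp [ha, hb, Prod.ext_iff]
    have hdim : Module.finrank ℝ ((Fin p → ℝ) × (Fin (n - p) → ℝ))
        = Module.finrank ℝ (Fin n → ℝ) := by
      simp only [Module.finrank_prod, Module.finrank_pi, Fintype.card_fin]
      omega
    have hfsurj : Function.Surjective f :=
      (LinearMap.injective_iff_surjective_of_finrank_eq_finrank hdim).mp hfinj
    intro v
    obtain ⟨⟨a, b⟩, hab⟩ := hfsurj v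
    exact ⟨a, b, by simpa [hf, eq_comm] using hab⟩
  -- conclude L = K
  have hLK : L = K := by
    have hvec : ∀ v : Fin n → ℝ, L *ᵥ v = K *ᵥ v := by
      intro v
      obtain ⟨a, b, rfl⟩ := hsurj v
      rw [mulVec_add, mulVec_add, mulVec_mulVec, mulVec_mulVec, mulVec_mulVec,
        mulVec_mulVec, eLH, eKH, eLSW, eKSW]
    ext i j
    have h4 := congrFun (hvec (Pi.single j 1)) i
    simpa [mulVec_single] using h4
  rw [hLK]
end

section
/- With Σ positive definite, H of full rank n×p (p < n), and W an n×(n−p) matrix satisfying WᵀH = 0 and WᵀW = I, the matrix Wᵀ Σ W is positive definite, and |Σ| · |HᵀΣ⁻¹H| = |WᵀΣW| · |HᵀH|. -/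
open Matrix

private lemma aux_posdef {n m : ℕ} {A : Matrix (Fin n) (Fin n) ℝ} (hA : A.PosDef)
    (B : Matrix (Fin n) (Fin m) ℝ) (hB : Function.Injective B.mulVec) :
    (Bᵀ * A * B).PosDef := by
  have hAt : Aᵀ = A := by
    have := hA.1
    rwa [Matrix.IsHermitian, conjTranspose_eq_transpose_of_trivial] at this
  refine Matrix.PosDef.of_dotProduct_mulVec_pos ?_ ?_
  · rw [Matrix.IsHermitian, conjTranspose_eq_transpose_of_trivial, transpose_mul, transpose_mul,
      transpose_transpose, hAt, ← Matrix.mul_assoc]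
  · intro x hx
    have hBx : B *ᵥ x ≠ 0 := by
      intro h
      exact hx (hB (by simpa using h))
    have := hA.dotProduct_mulVec_pos hBx
    simpa [star_trivial, mul_assoc, ← mulVec_mulVec, dotProduct_mulVec,
      vecMul_transpose] using this

private lemma aux_block {n p q : ℕ} (e : Fin p ⊕ Fin q ≃ Fin n)
    (A : Matrix (Fin n) (Fin n) ℝ)
    (X X' : Matrix (Fin n) (Fin p) ℝ) (Y Y' : Matrix (Fin n) (Fin q) ℝ) :
    ((fromCols X Y).submatrix id e.symm)ᵀ * A * ((fromCols X' Y').submatrix id e.symm)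
      = (fromBlocks (Xᵀ*A*X') (Xᵀ*A*Y') (Yᵀ*A*X') (Yᵀ*A*Y')).submatrix e.symm e.symm := by
  have h1 : ((fromCols X Y).submatrix id e.symm)ᵀ
      = (fromRows Xᵀ Yᵀ).submatrix e.symm id := by
    rw [transpose_submatrix, transpose_fromCols]
  have h2 : ∀ (U : Matrix (Fin p ⊕ Fin q) (Fin n) ℝ) (V : Matrix (Fin n) (Fin n) ℝ),
      U.submatrix e.symm id * V = (U * V).submatrix e.symm id := by
    intro U V; ext i j; simp [mul_apply]
  have h3 : ∀ (U : Matrix (Fin p ⊕ Fin q) (Fin n) ℝ)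
      (V : Matrix (Fin n) (Fin p ⊕ Fin q) ℝ),
      U.submatrix e.symm id * V.submatrix id e.symm = (U * V).submatrix e.symm e.symm := by
    intro U V; ext i j; simp [mul_apply]
  rw [h1, h2, h3, fromRows_mul, fromRows_mul_fromCols]

/-- With Σ positive definite, H full rank and W an orthonormal complement of H,
WᵀΣW is positive definite and |Σ|·|HᵀΣ⁻¹H| = |WᵀΣW|·|HᵀH|. -/
theorem stmt_10 {n p : ℕ} (hpn : p < n)
    (S : Matrix (Fin n) (Fin n) ℝ) (hS : S.PosDef)
    (H : Matrix (Fin n) (Fin p) ℝ) (hH : H.rank = p)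
    (W : Matrix (Fin n) (Fin (n - p)) ℝ)
    (hWH : Wᵀ * H = 0) (hWW : Wᵀ * W = 1) :
    (Wᵀ * S * W).PosDef ∧
    S.det * (Hᵀ * S⁻¹ * H).det = (Wᵀ * S * W).det * (Hᵀ * H).det := by
  -- injectivity of mulVec W
  have hWinj : Function.Injective W.mulVec := by
    intro x y h
    have : (Wᵀ * W) *ᵥ x = (Wᵀ * W) *ᵥ y := by
      rw [← mulVec_mulVec, ← mulVec_mulVec, h]
    simpa [hWW] using this
  -- injectivity of mulVec H
  have hHinj : Function.Injective H.mulVec := by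
    have hrn := LinearMap.finrank_range_add_finrank_ker H.mulVecLin
    have hrk : Module.finrank ℝ (LinearMap.range H.mulVecLin) = p := hH
    rw [hrk, Module.finrank_pi ℝ] at hrn
    simp only [Fintype.card_fin] at hrn
    have h0 : Module.finrank ℝ (LinearMap.ker H.mulVecLin) = 0 := by omega
    have hker : LinearMap.ker H.mulVecLin = ⊥ := Submodule.finrank_eq_zero.mp h0
    have hinj := LinearMap.ker_eq_bot.mp hker
    have hfun : H.mulVec = ⇑H.mulVecLin := by
      funext v; simp [Matrix.mulVecLin_apply]
    rw [hfun]
    exact hinj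
  have hSinv : S⁻¹.PosDef := hS.inv
  have hPD1 : (Wᵀ * S * W).PosDef := aux_posdef hS W hWinj
  have hPD2 : (Hᵀ * S⁻¹ * H).PosDef := aux_posdef hSinv H hHinj
  refine ⟨hPD1, ?_⟩
  have hSt : Sᵀ = S := by
    have := hS.1
    rwa [Matrix.IsHermitian, conjTranspose_eq_transpose_of_trivial] at this
  have hSu : IsUnit S.det := hS.det_pos.ne'.isUnit
  have hSS : S⁻¹ * S = 1 := nonsing_inv_mul S hSu
  have hSSi : S * S⁻¹ = 1 := mul_nonsing_inv S hSu
  have hSinvT : S⁻¹ᵀ = S⁻¹ := by rw [transpose_nonsing_inv, hSt]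
  have hHW : Hᵀ * W = 0 := by
    have := congrArg Matrix.transpose hWH
    simpa using this
  -- the reindexing equivalence
  have hq : p + (n - p) = n := by omega
  let e : Fin p ⊕ Fin (n - p) ≃ Fin n := finSumFinEquiv.trans (finCongr hq)
  set M : Matrix (Fin n) (Fin n) ℝ := (fromCols H W).submatrix id e.symm with hM
  set N : Matrix (Fin n) (Fin n) ℝ := (fromCols (S⁻¹ * H) W).submatrix id e.symm with hN
  -- det (Mᵀ * 1 * M)
  have e1 : Mᵀ * 1 * M = (fromBlocks (Hᵀ*H) 0 0 1).submatrix e.symm e.symm := by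
    rw [hM, aux_block e 1 H H W W]
    simp only [Matrix.mul_one, hWH, hWW, hHW]
  have d1 : M.det * M.det = (Hᵀ * H).det := by
    have := congrArg Matrix.det e1
    rwa [mul_one, det_mul, det_transpose, det_submatrix_equiv_self,
      det_fromBlocks_zero₂₁, det_one, mul_one] at this
  -- det (Nᵀ * S * N)
  have k1 : Hᵀ * S⁻¹ * S = Hᵀ := by rw [Matrix.mul_assoc, hSS, Matrix.mul_one]
  have b11 : (S⁻¹*H)ᵀ * S * (S⁻¹*H) = Hᵀ*S⁻¹*H := by
    rw [transpose_mul, hSinvT, k1, ← Matrix.mul_assoc]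
  have b12 : (S⁻¹*H)ᵀ * S * W = 0 := by
    rw [transpose_mul, hSinvT, k1, hHW]
  have b21 : Wᵀ * S * (S⁻¹*H) = 0 := by
    rw [Matrix.mul_assoc, ← Matrix.mul_assoc S, hSSi, Matrix.one_mul, hWH]
  have hb2 : fromBlocks ((S⁻¹*H)ᵀ*S*(S⁻¹*H)) ((S⁻¹*H)ᵀ*S*W) (Wᵀ*S*(S⁻¹*H)) (Wᵀ*S*W)
      = fromBlocks (Hᵀ*S⁻¹*H) 0 0 (Wᵀ*S*W) := by
    rw [b11, b12, b21]
  have e2 : Nᵀ * S * N = (fromBlocks (Hᵀ*S⁻¹*H) 0 0 (Wᵀ*S*W)).submatrix e.symm e.symm := by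
    rw [hN, aux_block e S (S⁻¹*H) (S⁻¹*H) W W, hb2]
  have d2 : N.det * N.det * S.det = (Hᵀ*S⁻¹*H).det * (Wᵀ*S*W).det := by
    have := congrArg Matrix.det e2
    rw [det_mul, det_mul, det_transpose, det_submatrix_equiv_self,
      det_fromBlocks_zero₂₁] at this
    linarith [this]
  -- det (Mᵀ * 1 * N)
  have e3 : Mᵀ * 1 * N = (fromBlocks (Hᵀ*S⁻¹*H) 0 (Wᵀ*S⁻¹*H) 1).submatrix e.symm e.symm := by
    rw [hM, hN, aux_block e 1 H (S⁻¹*H) W W]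
    simp only [Matrix.mul_one, hHW, hWW, ← Matrix.mul_assoc]
  have d3 : M.det * N.det = (Hᵀ*S⁻¹*H).det := by
    have := congrArg Matrix.det e3
    rwa [mul_one, det_mul, det_transpose, det_submatrix_equiv_self,
      det_fromBlocks_zero₁₂, det_one, mul_one] at this
  have hb : (0:ℝ) < (Hᵀ*S⁻¹*H).det := hPD2.det_pos
  -- combine
  have key : (Hᵀ*S⁻¹*H).det * (S.det * (Hᵀ*S⁻¹*H).det)
      = (Hᵀ*S⁻¹*H).det * ((Wᵀ*S*W).det * (Hᵀ*H).det) := by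
    calc (Hᵀ*S⁻¹*H).det * (S.det * (Hᵀ*S⁻¹*H).det)
        = (M.det * N.det) * (M.det * N.det) * S.det := by rw [d3]; ring
      _ = (M.det * M.det) * (N.det * N.det * S.det) := by ring
      _ = (Hᵀ*H).det * ((Hᵀ*S⁻¹*H).det * (Wᵀ*S*W).det) := by rw [d1, d2]
      _ = (Hᵀ*S⁻¹*H).det * ((Wᵀ*S*W).det * (Hᵀ*H).det) := by ring
  exact mul_left_cancel₀ hb.ne' key
end
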